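/- arXiv:2507.01716 — 4 statements merged into one kernel-verified Lean document; each statement's English description precedes it below -/
import Mathlib

section
/- Let D = D_{2r} = ⟨c⟩ ⋊ ⟨b⟩ be dihedral, p an odd prime with p ∤ r, and let M be a simple F_p D-module of even dimension d. For every pair of nonzero vectors m, n ∈ E_1(b) (the fixed space of b), there exists a D-module endomorphism f ∈ End_D(M) with f(m) = n. -/
open DihedralGroup

/-- Let `M` be a simple `F_p D_{2r}`-module of even dimension (`p` an odd prime, `p ∤ r`),
with `D_{2r} = ⟨c⟩ ⋊ ⟨b⟩` and `b` the reflection `sr 0`. For any nonzero `m, n` in the fixed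
space `E_1(b)`, there is a `D`-module endomorphism `f` of `M` with `f m = n`. -/
theorem stmt_4 (p r d : ℕ) [Fact p.Prime] (hp : Odd p) (hr : 3 ≤ r) (hpr : ¬ p ∣ r)
    (M : Type) [AddCommGroup M] [Module (ZMod p) M] [FiniteDimensional (ZMod p) M]
    (ρ : Representation (ZMod p) (DihedralGroup r) M)
    (hMnt : Nontrivial M)
    (hsimple : ∀ W : Submodule (ZMod p) M, (∀ g, ∀ m ∈ W, ρ g m ∈ W) → W = ⊥ ∨ W = ⊤)
    (hd : Module.finrank (ZMod p) M = d) (hdeven : Even d)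
    (m n : M) (hm : ρ (DihedralGroup.sr 0) m = m) (hn : ρ (DihedralGroup.sr 0) n = n)
    (hm0 : m ≠ 0) (hn0 : n ≠ 0) :
    ∃ f ∈ Subring.centralizer (Set.range fun g => (ρ g : Module.End (ZMod p) M)),
      f m = n := by
  haveI : NeZero r := ⟨by omega⟩
  set x : Module.End (ZMod p) M := ρ (DihedralGroup.r 1) with hxdef
  set s : Module.End (ZMod p) M := ρ (DihedralGroup.sr 0) with hsdef
  set y : Module.End (ZMod p) M := ρ (DihedralGroup.r (-1)) with hydef
  have hss : s * s = 1 := by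
    rw [hsdef, ← map_mul, sr_mul_sr, sub_zero, ← one_def, map_one]
  have hsx : s * x = y * s := by
    rw [hsdef, hxdef, hydef, ← map_mul, ← map_mul, sr_mul_r, r_mul_sr]
    norm_num
  have hxy : Commute x y := by
    have h1 : x * y = 1 := by
      rw [hxdef, hydef, ← map_mul, r_mul_r, add_neg_cancel, ← one_def, map_one]
    have h2 : y * x = 1 := by
      rw [hxdef, hydef, ← map_mul, r_mul_r, neg_add_cancel, ← one_def, map_one]
    rw [Commute, SemiconjBy, h1, h2]
  have hrk : ∀ k : ZMod r, ρ (DihedralGroup.r k) = x ^ k.val := by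
    intro k
    rw [hxdef, ← map_pow, r_one_pow, ZMod.natCast_rightInverse k]
  -- m generates M as a module over the powers of x
  have hspan : n ∈ Submodule.span (ZMod p) (Set.range fun j : ℕ => (x ^ j) m) := by
    have hW : Submodule.span (ZMod p) (Set.range fun g => ρ g m) = ⊤ := by
      rcases hsimple _ (fun g v hv => by
        have hmap : Submodule.map (ρ g) (Submodule.span (ZMod p) (Set.range fun g => ρ g m))
            ≤ Submodule.span (ZMod p) (Set.range fun g => ρ g m) := by
          rw [Submodule.map_span, Submodule.span_le]
          rintro _ ⟨_, ⟨h, rfl⟩, rfl⟩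
          exact Submodule.subset_span ⟨g * h, by simp [map_mul]⟩
        exact hmap ⟨v, hv, rfl⟩) with h | h
      · exfalso
        apply hm0
        have : m ∈ Submodule.span (ZMod p) (Set.range fun g => ρ g m) :=
          Submodule.subset_span ⟨1, by simp⟩
        rwa [h, Submodule.mem_bot] at this
      · exact h
    have hle : Submodule.span (ZMod p) (Set.range fun g => ρ g m) ≤
        Submodule.span (ZMod p) (Set.range fun j : ℕ => (x ^ j) m) := by
      rw [Submodule.span_le]
      rintro _ ⟨g, rfl⟩
      apply Submodule.subset_span
      cases g with
      | r k =>
          refine ⟨k.val, ?_⟩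
          show (x ^ k.val) m = ρ (DihedralGroup.r k) m
          rw [hrk]
      | sr k =>
          refine ⟨(-k).val, ?_⟩
          show (x ^ (-k).val) m = ρ (DihedralGroup.sr k) m
          have hg : DihedralGroup.sr k = DihedralGroup.r (-k) * DihedralGroup.sr 0 := by
            rw [r_mul_sr, zero_sub, neg_neg]
          rw [← hrk, hg, map_mul, Module.End.mul_apply, ← hsdef, hm]
    have hmem : n ∈ Submodule.span (ZMod p) (Set.range fun g => ρ g m) := by
      rw [hW]; trivial
    exact hle hmem
  rw [Finsupp.mem_span_range_iff_exists_finsupp] at hspan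
  obtain ⟨a, ha⟩ := hspan
  set A : Module.End (ZMod p) M := a.sum fun j c => c • x ^ j with hAdef
  have hsxs : s * x * s = y := by rw [hsx, mul_assoc, hss, mul_one]
  have hconj : ∀ j : ℕ, s * x ^ j * s = y ^ j := by
    intro j
    set u : (Module.End (ZMod p) M)ˣ := ⟨s, s, hss, hss⟩ with hudef
    have hu : (u : Module.End (ZMod p) M) = s := rfl
    have hui : ((u⁻¹ : (Module.End (ZMod p) M)ˣ) : Module.End (ZMod p) M) = s := rfl
    calc s * x ^ j * s = ↑u * x ^ j * ↑u⁻¹ := by rw [hu, hui]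
      _ = (↑u * x * ↑u⁻¹) ^ j := (Units.conj_pow u x j).symm
      _ = y ^ j := by rw [hu, hui, hsxs]
  have hsAs : s * A * s = a.sum fun j c => c • y ^ j := by
    rw [hAdef, Finsupp.sum, Finsupp.sum, Finset.mul_sum, Finset.sum_mul]
    refine Finset.sum_congr rfl fun j _ => ?_
    rw [mul_smul_comm, smul_mul_assoc, hconj]
  have hcommA_x : Commute x A :=
    Commute.sum_right _ _ _ fun j _ => ((Commute.refl x).pow_right j).smul_right _
  have hcommA'_x : Commute x (s * A * s) := by
    rw [hsAs]
    exact Commute.sum_right _ _ _ fun j _ => (hxy.pow_right j).smul_right _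
  set f : Module.End (ZMod p) M := ((2 : ZMod p)⁻¹) • (A + s * A * s) with hfdef
  have hcomm_x : Commute x f := (hcommA_x.add_right hcommA'_x).smul_right _
  have hcomm_s : Commute s f := by
    refine Commute.smul_right ?_ _
    rw [Commute, SemiconjBy, mul_add, add_mul]
    rw [show s * (s * A * s) = A * s by rw [← mul_assoc, ← mul_assoc, hss, one_mul],
      show s * A * s * s = s * A by rw [mul_assoc, hss, mul_one]]
    exact add_comm _ _
  have h2 : (2 : ZMod p) ≠ 0 := by
    intro h
    have : (p : ℕ) ∣ 2 := by
      have := (ZMod.natCast_eq_zero_iff 2 p).mp (by exact_mod_cast h)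
      exact this
    have hp2 : p = 2 := (Nat.prime_dvd_prime_iff_eq Fact.out Nat.prime_two).mp this
    rw [hp2, Nat.odd_iff] at hp
    omega
  refine ⟨f, ?_, ?_⟩
  · rw [Subring.mem_centralizer_iff]
    rintro _ ⟨g, rfl⟩
    cases g with
    | r k =>
        show ρ (DihedralGroup.r k) * f = f * ρ (DihedralGroup.r k)
        rw [hrk]
        exact (hcomm_x.pow_left k.val).eq
    | sr k =>
        show ρ (DihedralGroup.sr k) * f = f * ρ (DihedralGroup.sr k)
        have hg : DihedralGroup.sr k = DihedralGroup.sr 0 * DihedralGroup.r k := by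
          rw [sr_mul_r, zero_add]
        rw [hg, map_mul, hrk, ← hsdef]
        exact (hcomm_s.mul_left (hcomm_x.pow_left k.val)).eq
  · have hAm : A m = n := by
      rw [hAdef, Finsupp.sum, ← ha, Finsupp.sum]
      simp [LinearMap.sum_apply]
    have hA'm : (s * A * s) m = n := by
      have hsm : s m = m := hm
      have hsn : s n = n := hn
      rw [Module.End.mul_apply, Module.End.mul_apply, hsm, hAm, hsn]
    rw [hfdef, LinearMap.smul_apply, LinearMap.add_apply, hAm, hA'm, ← two_smul (ZMod p),
      smul_smul, inv_mul_cancel₀ h2, one_smul]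
end

section
/- Let G = V ⋊_ψ D where V = Z_p^d, p ∤ |D|, and ψ is an irreducible, non-trivial representation of D on V. Then the normalizer N_G(D) of D in G equals D. -/
/-- The multiplicative group structure (composition) that `AddAut V` carried in older Mathlib. -/
instance addAutGroupOld {V : Type*} [Add V] : Group (AddAut V) where
  mul g h := AddEquiv.trans h g
  one := AddEquiv.refl _
  inv := AddEquiv.symm
  mul_assoc _ _ _ := rfl
  one_mul _ := rfl
  mul_one _ := rfl
  inv_mul_cancel := AddEquiv.self_trans_symm

/-- The canonical homomorphism `AddAut V →* MulAut (Multiplicative V)`. -/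
def addAutToMulAut {V : Type*} [AddGroup V] : AddAut V →* MulAut (Multiplicative V) :=
  MonoidHom.mk' (fun e => AddEquiv.toMultiplicative e) (fun e₁ e₂ => by ext x; rfl)

/-- Let `G = V ⋊_ψ D` where `V = Z_p^d`, `p ∤ |D|`, and `ψ` is an irreducible non-trivial
representation of `D` on `V`. Then the normalizer of `D` in `G` equals `D`. -/
theorem stmt_8 (p : ℕ) [Fact p.Prime]
    (V : Type) [AddCommGroup V] [Finite V] (hV : ∀ v : V, p • v = 0)
    (D : Type) [Group D] [Finite D] (hpD : ¬ p ∣ Nat.card D)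
    (ψ : D →* AddAut V)
    (hirr : ∀ W : AddSubgroup V, (∀ g, ∀ v ∈ W, ψ g v ∈ W) → W = ⊥ ∨ W = ⊤)
    (hnt : ∃ g v, ψ g v ≠ v) :
    Subgroup.normalizer (SetLike.coe (SemidirectProduct.inr.range :
        Subgroup (Multiplicative V ⋊[addAutToMulAut.comp ψ] D)))
      = SemidirectProduct.inr.range := by
  classical
  have hmem : ∀ z : Multiplicative V ⋊[addAutToMulAut.comp ψ] D,
      z ∈ (SemidirectProduct.inr.range : Subgroup _) ↔ z.left = 1 := by
    intro z
    constructor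
    · rintro ⟨d, rfl⟩; rfl
    · intro h
      exact ⟨z.right, by ext <;> simp [h]⟩
  set W : AddSubgroup V :=
    { carrier := {v | ∀ g : D, ψ g v = v}
      zero_mem' := by intro g; simp
      add_mem' := by intro a b ha hb g; simp [map_add, ha g, hb g]
      neg_mem' := by intro a ha g; simp [map_neg, ha g] } with hW
  have hWinv : ∀ g, ∀ v ∈ W, ψ g v ∈ W := by
    intro g v hv h
    rw [hv g]; exact hv h
  have hWbot : W = ⊥ := by
    rcases hirr W hWinv with h | h
    · exact h
    · exfalso
      obtain ⟨g, v, hgv⟩ := hnt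
      exact hgv ((h ▸ (AddSubgroup.mem_top v : v ∈ (⊤ : AddSubgroup V)) : v ∈ W) g)
  apply le_antisymm
  · intro x hx
    rw [Subgroup.mem_normalizer_iff] at hx
    rw [hmem]
    have key : ∀ g : D, ψ g (Multiplicative.toAdd x.left) = Multiplicative.toAdd x.left := by
      intro g
      have h1 : (SemidirectProduct.inr (x.right⁻¹ * g * x.right) :
          Multiplicative V ⋊[addAutToMulAut.comp ψ] D) ∈ SemidirectProduct.inr.range :=
        ⟨_, rfl⟩
      have h2 := (hx _).mp h1
      rw [hmem] at h2
      simp only [SemidirectProduct.mul_left, SemidirectProduct.mul_right,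
        SemidirectProduct.inv_left, SemidirectProduct.inv_right,
        SemidirectProduct.left_inr, SemidirectProduct.right_inr,
        map_one, mul_one, map_mul, map_inv, inv_one,
        MulAut.mul_apply, MulAut.apply_inv_self, MulAut.inv_apply_self,
        mul_inv_eq_one] at h2
      have h3 : (addAutToMulAut.comp ψ) g x.left = x.left := by
        simpa [MulAut.mul_apply] using h2.symm
      exact congrArg Multiplicative.toAdd h3
    have hmW : Multiplicative.toAdd x.left ∈ W := key
    rw [hWbot] at hmW
    have h0 : Multiplicative.toAdd x.left = 0 := hmW
    exact h0
  · rintro _ ⟨d, rfl⟩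
    rw [Subgroup.mem_normalizer_iff]
    intro h
    rw [hmem, hmem]
    simp [SemidirectProduct.mul_left, SemidirectProduct.inv_left]
end

section
/- For i ∈ {1,2}, let G_i = Z_p^{d_i} ⋊_{ψ_i} D_i where p ∤ |D_1||D_2|. Then G_1 ≅ G_2 if and only if there exists a group isomorphism σ : D_1 → D_2 such that ψ_2 ∘ σ ≅ ψ_1 as representations of D_1. Moreover, when such σ exists, there is an isomorphism f : G_1 → G_2 with f(D_1) = D_2 and f restricted to D_1 equal to σ. -/
open SemidirectProduct

lemma conj_inl' {V G : Type*} [AddCommGroup V] [Group G] {φ : G →* MulAut (Multiplicative V)}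
    (a : Multiplicative V ⋊[φ] G) (n : Multiplicative V) :
    a * inl n * a⁻¹ = inl (φ a.right n) := by
  ext
  · simp only [mul_left, inv_left, inv_right, mul_right, right_inl, left_inl, mul_one, map_mul,
      map_inv]
    rw [MulAut.apply_inv_self, mul_comm a.left ((φ a.right) n), mul_inv_cancel_right]
  · simp [mul_right, inv_right, right_inl]

lemma aux_pow_p {p : ℕ} [hp : Fact p.Prime] {V : Type} [AddCommGroup V] {D : Type} [Group D]
    [Finite D] {ψ : D →* AddAut V} (hV : ∀ v : V, p • v = 0) (hpD : ¬ p ∣ Nat.card D)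
    (x : Multiplicative V ⋊[addAutToMulAut.comp ψ] D) : x ^ p = 1 ↔ x.right = 1 := by
  constructor
  · intro h
    have h2 : x.right ^ p = 1 := by
      have := congrArg rightHom h
      simpa [map_pow] using this
    rcases hp.out.eq_one_or_self_of_dvd _ (orderOf_dvd_of_pow_eq_one h2) with h | h
    · exact orderOf_eq_one_iff.mp h
    · exact absurd (h ▸ orderOf_dvd_natCard x.right) hpD
  · intro h
    have hx : x = inl x.left := by
      conv_lhs => rw [← inl_left_mul_inr_right x]
      rw [h, map_one, mul_one]
    have hl : x.left ^ p = 1 := by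
      have h1 : Multiplicative.toAdd (x.left ^ p) = 0 := by rw [toAdd_pow]; exact hV _
      simpa using congrArg Multiplicative.ofAdd h1
    rw [hx, ← map_pow, hl, map_one]

section Key

variable {p : ℕ} [hp : Fact p.Prime] {V₁ V₂ : Type} [AddCommGroup V₁] [AddCommGroup V₂]
  {D₁ D₂ : Type} [Group D₁] [Group D₂] [Finite D₁] [Finite D₂]
  {ψ₁ : D₁ →* AddAut V₁} {ψ₂ : D₂ →* AddAut V₂}

lemma aux_keep_inl (hV₁ : ∀ v : V₁, p • v = 0) (hV₂ : ∀ v : V₂, p • v = 0)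
    (hpD₁ : ¬ p ∣ Nat.card D₁) (hpD₂ : ¬ p ∣ Nat.card D₂)
    (f : (Multiplicative V₁ ⋊[addAutToMulAut.comp ψ₁] D₁) ≃*
      (Multiplicative V₂ ⋊[addAutToMulAut.comp ψ₂] D₂))
    (x : Multiplicative V₁ ⋊[addAutToMulAut.comp ψ₁] D₁) (hx : x.right = 1) :
    (f x).right = 1 := by
  rw [← aux_pow_p hV₂ hpD₂, ← map_pow, (aux_pow_p hV₁ hpD₁ x).mpr hx, map_one]

lemma aux_f_inl (hV₁ : ∀ v : V₁, p • v = 0) (hV₂ : ∀ v : V₂, p • v = 0)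
    (hpD₁ : ¬ p ∣ Nat.card D₁) (hpD₂ : ¬ p ∣ Nat.card D₂)
    (f : (Multiplicative V₁ ⋊[addAutToMulAut.comp ψ₁] D₁) ≃*
      (Multiplicative V₂ ⋊[addAutToMulAut.comp ψ₂] D₂))
    (v : Multiplicative V₁) : f (inl v) = inl ((f (inl v)).left) := by
  conv_lhs => rw [← inl_left_mul_inr_right (f (inl v))]
  rw [aux_keep_inl hV₁ hV₂ hpD₁ hpD₂ f (inl v) rfl, map_one, mul_one]

lemma aux_tau_sigma (hV₁ : ∀ v : V₁, p • v = 0) (hV₂ : ∀ v : V₂, p • v = 0)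
    (hpD₁ : ¬ p ∣ Nat.card D₁) (hpD₂ : ¬ p ∣ Nat.card D₂)
    (f : (Multiplicative V₁ ⋊[addAutToMulAut.comp ψ₁] D₁) ≃*
      (Multiplicative V₂ ⋊[addAutToMulAut.comp ψ₂] D₂))
    (g : D₁) : (f.symm (inr ((f (inr g)).right))).right = g := by
  have h1 : (inr ((f (inr g)).right) : Multiplicative V₂ ⋊[addAutToMulAut.comp ψ₂] D₂)
      = (inl ((f (inr g)).left))⁻¹ * f (inr g) := by
    rw [eq_inv_mul_iff_mul_eq]
    exact inl_left_mul_inr_right (f (inr g))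
  rw [h1, map_mul, map_inv, f.symm_apply_apply, mul_right, inv_right,
    aux_keep_inl hV₂ hV₁ hpD₂ hpD₁ f.symm _ rfl, inv_one, one_mul, right_inr]

lemma aux_forward (hV₁ : ∀ v : V₁, p • v = 0) (hV₂ : ∀ v : V₂, p • v = 0)
    (hpD₁ : ¬ p ∣ Nat.card D₁) (hpD₂ : ¬ p ∣ Nat.card D₂)
    (f : (Multiplicative V₁ ⋊[addAutToMulAut.comp ψ₁] D₁) ≃*
      (Multiplicative V₂ ⋊[addAutToMulAut.comp ψ₂] D₂)) :
    ∃ (σ : D₁ ≃* D₂) (e : V₁ ≃+ V₂), ∀ g v, e (ψ₁ g v) = ψ₂ (σ g) (e v) := by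
  refine ⟨⟨⟨fun g => (f (inr g)).right, fun d => (f.symm (inr d)).right,
      aux_tau_sigma hV₁ hV₂ hpD₁ hpD₂ f, fun d => ?_⟩, fun a b => ?_⟩,
    ⟨⟨fun v => Multiplicative.toAdd ((f (inl (Multiplicative.ofAdd v))).left),
      fun w => Multiplicative.toAdd ((f.symm (inl (Multiplicative.ofAdd w))).left),
      fun v => ?_, fun w => ?_⟩, fun a b => ?_⟩, fun g v => ?_⟩
  · have := aux_tau_sigma hV₂ hV₁ hpD₂ hpD₁ f.symm d
    simpa using this
  · show (f (inr (a * b))).right = (f (inr a)).right * (f (inr b)).right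
    rw [map_mul, map_mul, mul_right]
  · show Multiplicative.toAdd ((f.symm (inl (Multiplicative.ofAdd
        (Multiplicative.toAdd ((f (inl (Multiplicative.ofAdd v))).left))))).left)= v
    rw [ofAdd_toAdd, ← aux_f_inl hV₁ hV₂ hpD₁ hpD₂ f, f.symm_apply_apply,
      left_inl, toAdd_ofAdd]
  · show Multiplicative.toAdd ((f (inl (Multiplicative.ofAdd
        (Multiplicative.toAdd ((f.symm (inl (Multiplicative.ofAdd w))).left))))).left) = w
    rw [ofAdd_toAdd, ← aux_f_inl hV₂ hV₁ hpD₂ hpD₁ f.symm, f.apply_symm_apply,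
      left_inl, toAdd_ofAdd]
  · show Multiplicative.toAdd ((f (inl (Multiplicative.ofAdd (a + b)))).left)
      = Multiplicative.toAdd ((f (inl (Multiplicative.ofAdd a))).left)
        + Multiplicative.toAdd ((f (inl (Multiplicative.ofAdd b))).left)
    have h1 : (Multiplicative.ofAdd (a + b)) = Multiplicative.ofAdd a * Multiplicative.ofAdd b :=
      rfl
    rw [h1, map_mul, map_mul, aux_f_inl hV₁ hV₂ hpD₁ hpD₂ f (Multiplicative.ofAdd a),
      aux_f_inl hV₁ hV₂ hpD₁ hpD₂ f (Multiplicative.ofAdd b), ← map_mul, left_inl]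
    rfl
  · -- intertwining
    have hcomm : (inl (((addAutToMulAut.comp ψ₁) g) (Multiplicative.ofAdd v))
          : Multiplicative V₁ ⋊[addAutToMulAut.comp ψ₁] D₁) * inr g
        = inr g * inl (Multiplicative.ofAdd v) := by
      rw [inl_aut, mul_assoc, ← map_mul, inv_mul_cancel, map_one, mul_one]
    have h3 := congrArg f hcomm
    rw [map_mul, map_mul, aux_f_inl hV₁ hV₂ hpD₁ hpD₂ f (Multiplicative.ofAdd v),
      aux_f_inl hV₁ hV₂ hpD₁ hpD₂ f
        (((addAutToMulAut.comp ψ₁) g) (Multiplicative.ofAdd v))] at h3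
    have h5 : (f (inl (((addAutToMulAut.comp ψ₁) g) (Multiplicative.ofAdd v)))).left
        = ((addAutToMulAut.comp ψ₂) ((f (inr g)).right))
            ((f (inl (Multiplicative.ofAdd v))).left) := by
      have h4 := congrArg SemidirectProduct.left h3
      simp only [mul_left, left_inl, right_inl, map_one, MulAut.one_apply] at h4
      rw [mul_comm] at h4
      exact mul_left_cancel h4
    exact congrArg Multiplicative.toAdd h5

omit [Finite D₁] [Finite D₂] in
lemma aux_build (σ : D₁ ≃* D₂) (e : V₁ ≃+ V₂) (h : ∀ g v, e (ψ₁ g v) = ψ₂ (σ g) (e v)) :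
    ∃ f : (Multiplicative V₁ ⋊[addAutToMulAut.comp ψ₁] D₁) ≃*
        (Multiplicative V₂ ⋊[addAutToMulAut.comp ψ₂] D₂),
      ∀ x : D₁, f (inr x) = inr (σ x) := by
  have h' : ∀ g w, e.symm (ψ₂ g w) = ψ₁ (σ.symm g) (e.symm w) := by
    intro g w
    apply e.injective
    rw [e.apply_symm_apply, h, σ.apply_symm_apply, e.apply_symm_apply]
  have hc : ∀ g : D₁, (AddEquiv.toMultiplicative e).toMonoidHom.comp
        ((addAutToMulAut.comp ψ₁) g).toMonoidHom
      = ((addAutToMulAut.comp ψ₂) (σ g)).toMonoidHom.comp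
        (AddEquiv.toMultiplicative e).toMonoidHom := by
    intro g; ext v; exact congrArg Multiplicative.ofAdd (h g (Multiplicative.toAdd v))
  have hc' : ∀ g : D₂, (AddEquiv.toMultiplicative e.symm).toMonoidHom.comp
        ((addAutToMulAut.comp ψ₂) g).toMonoidHom
      = ((addAutToMulAut.comp ψ₁) (σ.symm g)).toMonoidHom.comp
        (AddEquiv.toMultiplicative e.symm).toMonoidHom := by
    intro g; ext w; exact congrArg Multiplicative.ofAdd (h' g (Multiplicative.toAdd w))
  refine ⟨MonoidHom.toMulEquiv
      (map (AddEquiv.toMultiplicative e).toMonoidHom σ.toMonoidHom hc)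
      (map (AddEquiv.toMultiplicative e.symm).toMonoidHom σ.symm.toMonoidHom hc') ?_ ?_,
    fun x => by simp [MonoidHom.toMulEquiv, map_inr]⟩
  · refine hom_ext ?_ ?_ <;> ext x <;> simp [map_inl, map_inr]
  · refine hom_ext ?_ ?_ <;> ext x <;> simp [map_inl, map_inr]

end Key

/-- For `i ∈ {1,2}` let `G_i = Z_p^{d_i} ⋊_{ψ_i} D_i` with `p ∤ |D_1||D_2|`. Then
`G_1 ≅ G_2` iff there is an isomorphism `σ : D_1 → D_2` with `ψ_2 ∘ σ ≅ ψ_1`; moreover,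
given such a `σ` (with intertwiner `e`), there is an isomorphism `f : G_1 → G_2` carrying
`D_1` onto `D_2` and restricting to `σ` on `D_1`. -/
theorem stmt_10 (p : ℕ) [Fact p.Prime]
    (V₁ V₂ : Type) [AddCommGroup V₁] [AddCommGroup V₂] [Finite V₁] [Finite V₂]
    (hV₁ : ∀ v : V₁, p • v = 0) (hV₂ : ∀ v : V₂, p • v = 0)
    (D₁ D₂ : Type) [Group D₁] [Group D₂] [Finite D₁] [Finite D₂]
    (hpD : ¬ p ∣ Nat.card D₁ * Nat.card D₂)
    (ψ₁ : D₁ →* AddAut V₁) (ψ₂ : D₂ →* AddAut V₂) :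
    (Nonempty ((Multiplicative V₁ ⋊[addAutToMulAut.comp ψ₁] D₁) ≃*
        (Multiplicative V₂ ⋊[addAutToMulAut.comp ψ₂] D₂)) ↔
      ∃ (σ : D₁ ≃* D₂) (e : V₁ ≃+ V₂), ∀ g v, e (ψ₁ g v) = ψ₂ (σ g) (e v)) ∧
    ∀ (σ : D₁ ≃* D₂) (e : V₁ ≃+ V₂), (∀ g v, e (ψ₁ g v) = ψ₂ (σ g) (e v)) →
      ∃ f : (Multiplicative V₁ ⋊[addAutToMulAut.comp ψ₁] D₁) ≃*
          (Multiplicative V₂ ⋊[addAutToMulAut.comp ψ₂] D₂),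
        ∀ x : D₁, f (SemidirectProduct.inr x) = SemidirectProduct.inr (σ x) := by
  have hpD₁ : ¬ p ∣ Nat.card D₁ := fun h => hpD (h.mul_right _)
  have hpD₂ : ¬ p ∣ Nat.card D₂ := fun h => hpD (h.mul_left _)
  refine ⟨⟨fun ⟨f⟩ => aux_forward hV₁ hV₂ hpD₁ hpD₂ f, fun ⟨σ, e, h⟩ => ?_⟩,
    fun σ e h => aux_build σ e h⟩
  obtain ⟨f, -⟩ := aux_build σ e h
  exact ⟨f⟩
end

section
/- Let G = Z_p × D_{2r} with p an odd prime, p ∤ r, r ≥ 3. Then the number of pairs (ρ, τ) ∈ G × G with ⟨ρ, τ⟩ = G, |ρ| = 2p and |τ| = 2 is exactly (p−1) r φ(r). -/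
open DihedralGroup Subgroup

section Aux

lemma aux_comm {G : Type*} [Group G] {x y : G} (h : Commute x y)
    (htop : Subgroup.closure {x, y} = ⊤) (a b : G) : Commute a b := by
  have ha : a ∈ Subgroup.closure ({x, y} : Set G) := htop.symm ▸ Subgroup.mem_top a
  have hb : b ∈ Subgroup.closure ({x, y} : Set G) := htop.symm ▸ Subgroup.mem_top b
  refine Subgroup.closure_induction₂ ?_ ?_ ?_ ?_ ?_ ?_ ?_ ha hb
  · rintro a b (rfl | rfl) (rfl | rfl)
    · exact Commute.refl _
    · exact h
    · exact h.symm
    · exact Commute.refl _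
  · exact fun x _ => Commute.one_left x
  · exact fun x _ => Commute.one_right x
  · exact fun x y z _ _ _ h1 h2 => h1.mul_left h2
  · exact fun y z x _ _ _ h1 h2 => h1.mul_right h2
  · exact fun x y _ _ h1 => h1.inv_left
  · exact fun x y _ _ h1 => h1.inv_right

lemma aux_r_pow {n : ℕ} (a : ZMod n) (k : ℕ) :
    (DihedralGroup.r a) ^ k = DihedralGroup.r ((k : ZMod n) * a) := by
  induction k with
  | zero => simp
  | succ k ih => rw [pow_succ, ih, r_mul_r]; congr 1; push_cast; ring

lemma aux_central {n : ℕ} (a : ZMod n) (h : orderOf (DihedralGroup.r a) = 2) :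
    ∀ y : DihedralGroup n, Commute (DihedralGroup.r a) y := by
  have h2 : (DihedralGroup.r a) ^ 2 = 1 := by rw [← h]; exact pow_orderOf_eq_one _
  rw [aux_r_pow, DihedralGroup.one_def] at h2
  have haa : a + a = 0 := by
    have := (DihedralGroup.r.injEq _ _).mp h2
    push_cast at this
    linear_combination this
  have hna : -a = a := neg_eq_of_add_eq_zero_left haa
  intro y
  cases y with
  | r b => unfold Commute SemiconjBy; rw [r_mul_r, r_mul_r, add_comm]
  | sr b => unfold Commute SemiconjBy; rw [r_mul_sr, sr_mul_r, sub_eq_add_neg, hna]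

lemma aux_noncomm {n : ℕ} (hn : 3 ≤ n) :
    ¬ Commute (DihedralGroup.r (1 : ZMod n) : DihedralGroup n) (DihedralGroup.sr 0) := by
  unfold Commute SemiconjBy
  rw [r_mul_sr, sr_mul_r]
  intro h
  have h1 := (DihedralGroup.sr.injEq _ _).mp h
  have h2 : ((2 : ℕ) : ZMod n) = 0 := by push_cast; linear_combination -h1
  rw [ZMod.natCast_eq_zero_iff] at h2
  exact absurd (Nat.le_of_dvd two_pos h2) (by omega)

def auxInK {n : ℕ} (i d : ZMod n) : DihedralGroup n → Prop
  | .r a => a ∈ AddSubgroup.zmultiples d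
  | .sr b => b - i ∈ AddSubgroup.zmultiples d

def auxK {n : ℕ} (i d : ZMod n) : Subgroup (DihedralGroup n) where
  carrier := {g | auxInK i d g}
  one_mem' := by
    show (0 : ZMod n) ∈ AddSubgroup.zmultiples d
    exact zero_mem _
  mul_mem' := by
    rintro (a | a) (b | b) ha hb
    · show a + b ∈ AddSubgroup.zmultiples d
      exact add_mem ha hb
    · show (b - a) - i ∈ AddSubgroup.zmultiples d
      have h : (b - a) - i = (b - i) - a := by ring
      rw [h]; exact sub_mem hb ha
    · show (a + b) - i ∈ AddSubgroup.zmultiples d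
      have h : (a + b) - i = (a - i) + b := by ring
      rw [h]; exact add_mem ha hb
    · show (b - a) ∈ AddSubgroup.zmultiples d
      have h : b - a = (b - i) - (a - i) := by ring
      rw [h]; exact sub_mem hb ha
  inv_mem' := by
    rintro (a | a) ha
    · show -a ∈ AddSubgroup.zmultiples d
      exact neg_mem ha
    · exact ha

lemma aux_isUnit_of_closure {n : ℕ} (i j : ZMod n)
    (h : Subgroup.closure {DihedralGroup.sr i, DihedralGroup.sr j} = ⊤) :
    IsUnit (j - i) := by
  have hle : Subgroup.closure {DihedralGroup.sr i, DihedralGroup.sr j} ≤ auxK i (j - i) := by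
    rw [Subgroup.closure_le]
    rintro x (rfl | rfl)
    · show i - i ∈ AddSubgroup.zmultiples (j - i)
      simpa using zero_mem _
    · show j - i ∈ AddSubgroup.zmultiples (j - i)
      exact AddSubgroup.mem_zmultiples _
  rw [h] at hle
  have h1 : DihedralGroup.r (1 : ZMod n) ∈ auxK i (j - i) := hle (Subgroup.mem_top _)
  have h1' : (1 : ZMod n) ∈ AddSubgroup.zmultiples (j - i) := h1
  obtain ⟨k, hk⟩ := AddSubgroup.mem_zmultiples_iff.mp h1'
  exact IsUnit.of_mul_eq_one (k : ZMod n) (by rw [mul_comm, ← zsmul_eq_mul]; exact hk)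

lemma aux_top (p r : ℕ) [Fact p.Prime] [NeZero r] (hpr : ¬ p ∣ r)
    (v : ZMod p) (hv : v ≠ 0) (i : ZMod r) (u : (ZMod r)ˣ) :
    Subgroup.closure {((Multiplicative.ofAdd v, DihedralGroup.sr i) :
        Multiplicative (ZMod p) × DihedralGroup r),
      (1, DihedralGroup.sr (i + (u : ZMod r)))} = ⊤ := by
  set H := Subgroup.closure {((Multiplicative.ofAdd v, DihedralGroup.sr i) :
      Multiplicative (ZMod p) × DihedralGroup r), (1, DihedralGroup.sr (i + (u : ZMod r)))} with hH
  have h1 : (Multiplicative.ofAdd v, DihedralGroup.sr i) ∈ H :=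
    Subgroup.subset_closure (Set.mem_insert _ _)
  have h2 : ((1 : Multiplicative (ZMod p)), DihedralGroup.sr (i + (u : ZMod r))) ∈ H :=
    Subgroup.subset_closure (Set.mem_insert_of_mem _ rfl)
  have h3 : (Multiplicative.ofAdd v, DihedralGroup.r (u : ZMod r)) ∈ H := by
    have := mul_mem h1 h2
    rwa [Prod.mk_mul_mk, mul_one, sr_mul_sr, add_sub_cancel_left] at this
  have hw : ((r : ZMod p) * v) ≠ 0 := by
    have hr0 : (r : ZMod p) ≠ 0 := by
      rw [Ne, ZMod.natCast_eq_zero_iff]; exact hpr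
    exact mul_ne_zero hr0 hv
  have h4 : (Multiplicative.ofAdd ((r : ZMod p) * v), (1 : DihedralGroup r)) ∈ H := by
    have := pow_mem h3 r
    rwa [Prod.pow_mk, aux_r_pow, ZMod.natCast_self, zero_mul, ← DihedralGroup.one_def,
      ← ofAdd_nsmul, nsmul_eq_mul] at this
  have h5 : ∀ c : ZMod p, (Multiplicative.ofAdd c, (1 : DihedralGroup r)) ∈ H := by
    intro c
    have := pow_mem h4 ((c * ((r : ZMod p) * v)⁻¹).val)
    rwa [Prod.pow_mk, one_pow, ← ofAdd_nsmul, nsmul_eq_mul, ZMod.natCast_val, ZMod.cast_id,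
      mul_assoc, inv_mul_cancel₀ hw, mul_one] at this
  have h6 : ((1 : Multiplicative (ZMod p)), DihedralGroup.r (u : ZMod r)) ∈ H := by
    have := mul_mem (h5 (-v)) h3
    rwa [Prod.mk_mul_mk, one_mul, ← ofAdd_add, neg_add_cancel, ofAdd_zero] at this
  have h7 : ∀ a : ZMod r, ((1 : Multiplicative (ZMod p)), DihedralGroup.r a) ∈ H := by
    intro a
    have := pow_mem h6 ((a * ((u⁻¹ : (ZMod r)ˣ) : ZMod r)).val)
    rwa [Prod.pow_mk, one_pow, aux_r_pow, ZMod.natCast_val, ZMod.cast_id,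
      mul_assoc, Units.inv_mul, mul_one] at this
  have h8 : ((1 : Multiplicative (ZMod p)), DihedralGroup.sr i) ∈ H := by
    have := mul_mem (h5 (-v)) h1
    rwa [Prod.mk_mul_mk, one_mul, ← ofAdd_add, neg_add_cancel, ofAdd_zero] at this
  have h9 : ∀ x : DihedralGroup r, ((1 : Multiplicative (ZMod p)), x) ∈ H := by
    rintro (a | b)
    · exact h7 a
    · have := mul_mem (h7 (i - b)) h8
      rwa [Prod.mk_mul_mk, one_mul, r_mul_sr, sub_sub_cancel] at this
  rw [eq_top_iff']
  intro g
  have := mul_mem (h5 g.1.toAdd) (h9 g.2)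
  rwa [Prod.mk_mul_mk, mul_one, one_mul, ofAdd_toAdd] at this

lemma aux_order_rho (p r : ℕ) [Fact p.Prime] (hp : Odd p)
    (v : ZMod p) (hv : v ≠ 0) (i : ZMod r) :
    orderOf ((Multiplicative.ofAdd v, DihedralGroup.sr i) :
      Multiplicative (ZMod p) × DihedralGroup r) = 2 * p := by
  have h1 : orderOf (Multiplicative.ofAdd v) = p := by
    rw [orderOf_ofAdd_eq_addOrderOf]
    exact addOrderOf_eq_prime (by simp [nsmul_eq_mul, ZMod.natCast_self]) hv
  have hp2 : Nat.Coprime p 2 := by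
    rw [Nat.coprime_comm]
    refine (Nat.prime_two.coprime_iff_not_dvd).mpr ?_
    have := Nat.odd_iff.mp hp
    omega
  rw [Prod.orderOf_mk, h1, DihedralGroup.orderOf_sr, Nat.Coprime.lcm_eq_mul hp2, mul_comm]

lemma aux_order_tau (p r : ℕ) (j : ZMod r) :
    orderOf (((1 : Multiplicative (ZMod p)), DihedralGroup.sr j) :
      Multiplicative (ZMod p) × DihedralGroup r) = 2 := by
  rw [Prod.orderOf_mk, orderOf_one, DihedralGroup.orderOf_sr, Nat.lcm_one_left]

end Aux

/-- For `G = Z_p × D_{2r}` (`p` an odd prime, `p ∤ r`, `r ≥ 3`), the number of pairs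
`(ρ, τ)` with `⟨ρ, τ⟩ = G`, `|ρ| = 2p` and `|τ| = 2` is exactly `(p-1) r φ(r)`. -/
theorem stmt_12 (p r : ℕ) [Fact p.Prime] (hp : Odd p) (hr : 3 ≤ r) (hpr : ¬ p ∣ r) :
    Nat.card {q : (Multiplicative (ZMod p) × DihedralGroup r) ×
        (Multiplicative (ZMod p) × DihedralGroup r) //
      Subgroup.closure {q.1, q.2} = ⊤ ∧ orderOf q.1 = 2 * p ∧ orderOf q.2 = 2}
      = (p - 1) * r * r.totient := by
  have : NeZero r := ⟨by omega⟩
  have hpprime : p.Prime := Fact.out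
  have hp2 : Nat.Coprime p 2 := by
    rw [Nat.coprime_comm]
    refine (Nat.prime_two.coprime_iff_not_dvd).mpr ?_
    have := Nat.odd_iff.mp hp
    omega
  set S := {q : (Multiplicative (ZMod p) × DihedralGroup r) ×
        (Multiplicative (ZMod p) × DihedralGroup r) //
      Subgroup.closure {q.1, q.2} = ⊤ ∧ orderOf q.1 = 2 * p ∧ orderOf q.2 = 2} with hS
  let f : ({v : ZMod p // v ≠ 0} × (ZMod r × (ZMod r)ˣ)) → S := fun t =>
    ⟨((Multiplicative.ofAdd t.1.1, DihedralGroup.sr t.2.1),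
      (1, DihedralGroup.sr (t.2.1 + (t.2.2 : ZMod r)))),
      aux_top p r hpr t.1.1 t.1.2 t.2.1 t.2.2,
      aux_order_rho p r hp t.1.1 t.1.2 t.2.1,
      aux_order_tau p r _⟩
  have hbij : Function.Bijective f := by
    constructor
    · rintro ⟨⟨v, hv⟩, i, u⟩ ⟨⟨v', hv'⟩, i', u'⟩ h
      have h' := congrArg Subtype.val h
      have h1 : Multiplicative.ofAdd v = Multiplicative.ofAdd v' :=
        congrArg (fun s => s.1.1) h'
      have h2 : DihedralGroup.sr i = DihedralGroup.sr i' :=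
        congrArg (fun s => s.1.2) h'
      have h4 : DihedralGroup.sr (i + (u : ZMod r)) = DihedralGroup.sr (i' + (u' : ZMod r)) :=
        congrArg (fun s => s.2.2) h'
      have hv0 : v = v' := by simpa using h1
      have hi0 : i = i' := by injection h2
      subst hv0; subst hi0
      injection h4 with h4'
      have huu : u = u' := Units.ext (by linear_combination h4')
      subst huu
      rfl
    · rintro ⟨⟨⟨ρ1, ρ2⟩, τ1, τ2⟩, htop, hρ, hτ⟩
      -- order computations
      have hcardM : Nat.card (Multiplicative (ZMod p)) = p := by
        rw [Nat.card_congr Multiplicative.toAdd, Nat.card_zmod]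
      have hρlcm : Nat.lcm (orderOf ρ1) (orderOf ρ2) = 2 * p :=
        (Prod.orderOf_mk (a := ρ1) (b := ρ2)).symm.trans hρ
      have hτlcm : Nat.lcm (orderOf τ1) (orderOf τ2) = 2 :=
        (Prod.orderOf_mk (a := τ1) (b := τ2)).symm.trans hτ
      have hρ1p : orderOf ρ1 ∣ p := by
        have := orderOf_dvd_natCard ρ1; rwa [hcardM] at this
      have hτ1p : orderOf τ1 ∣ p := by
        have := orderOf_dvd_natCard τ1; rwa [hcardM] at this
      have hρ2r : orderOf ρ2 ∣ 2 * r := by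
        have := orderOf_dvd_natCard ρ2; rwa [DihedralGroup.nat_card] at this
      have hρ1 : orderOf ρ1 = p := by
        rcases hpprime.eq_one_or_self_of_dvd _ hρ1p with h | h
        · exfalso
          rw [h, Nat.lcm_one_left] at hρlcm
          have hpd : p ∣ 2 * r := by
            rw [hρlcm] at hρ2r
            exact dvd_trans (dvd_mul_left p 2) hρ2r
          exact hpr (hp2.dvd_of_dvd_mul_left hpd)
        · exact h
      have hρ2 : orderOf ρ2 = 2 := by
        have hd : orderOf ρ2 ∣ 2 * p := by
          rw [← hρlcm]; exact Nat.dvd_lcm_right _ _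
        have hnp : ¬ p ∣ orderOf ρ2 := fun hpd =>
          hpr (hp2.dvd_of_dvd_mul_left (hpd.trans hρ2r))
        have hcop : (orderOf ρ2).Coprime p :=
          Nat.coprime_comm.mp ((hpprime.coprime_iff_not_dvd).mpr hnp)
        have hd2 : orderOf ρ2 ∣ 2 := hcop.dvd_of_dvd_mul_right hd
        rcases (Nat.dvd_prime Nat.prime_two).mp hd2 with h | h
        · exfalso
          rw [h, Nat.lcm_one_right, hρ1] at hρlcm
          have := hpprime.two_le
          omega
        · exact h
      have hτ1 : τ1 = 1 := by
        have hd2 : orderOf τ1 ∣ 2 := by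
          rw [← hτlcm]; exact Nat.dvd_lcm_left _ _
        have : orderOf τ1 ∣ 1 := by
          have := Nat.dvd_gcd hτ1p hd2
          rwa [hp2] at this
        rw [Nat.dvd_one] at this
        exact orderOf_eq_one_iff.mp this
      have hτ2 : orderOf τ2 = 2 := by
        rw [hτ1, orderOf_one, Nat.lcm_one_left] at hτlcm
        exact hτlcm
      -- the two dihedral components must not commute
      have hnc : ¬ Commute ρ2 τ2 := by
        intro hc
        have hcq : Commute ((ρ1, ρ2) : Multiplicative (ZMod p) × DihedralGroup r) (τ1, τ2) := by
          rw [Commute, SemiconjBy, Prod.mk_mul_mk, Prod.mk_mul_mk, Prod.mk.injEq]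
          exact ⟨mul_comm _ _, hc⟩
        have := aux_comm hcq htop ((1 : Multiplicative (ZMod p)), DihedralGroup.r (1 : ZMod r))
          ((1 : Multiplicative (ZMod p)), DihedralGroup.sr (0 : ZMod r))
        rw [Commute, SemiconjBy, Prod.mk_mul_mk, Prod.mk_mul_mk, Prod.mk.injEq] at this
        exact aux_noncomm hr this.2
      -- components are reflections
      obtain ⟨i, rfl⟩ : ∃ i, ρ2 = DihedralGroup.sr i := by
        cases ρ2 with
        | r a => exact absurd (aux_central a hρ2 τ2) (fun h => hnc (h))
        | sr i => exact ⟨i, rfl⟩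
      obtain ⟨j, rfl⟩ : ∃ j, τ2 = DihedralGroup.sr j := by
        cases τ2 with
        | r b => exact absurd ((aux_central b hτ2 (DihedralGroup.sr i)).symm) hnc
        | sr j => exact ⟨j, rfl⟩
      -- the difference is a unit
      have hsnd : Subgroup.closure {DihedralGroup.sr i, DihedralGroup.sr j} =
          (⊤ : Subgroup (DihedralGroup r)) := by
        have hmap := congrArg (Subgroup.map (MonoidHom.snd (Multiplicative (ZMod p))
          (DihedralGroup r))) htop
        rw [MonoidHom.map_closure, Subgroup.map_top_of_surjective _
          (fun x => ⟨(1, x), rfl⟩)] at hmap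
        rw [← hmap]
        congr 1
        rw [Set.image_insert_eq, Set.image_singleton]
        rfl
      obtain ⟨u, hu⟩ := aux_isUnit_of_closure i j hsnd
      have hρ1ne : ρ1 ≠ 1 := by
        intro h
        rw [h, orderOf_one] at hρ1
        exact absurd hρ1.symm (Nat.Prime.ne_one hpprime)
      have hvne : ρ1.toAdd ≠ 0 := fun h => hρ1ne (toAdd_eq_zero.mp h)
      refine ⟨⟨⟨ρ1.toAdd, hvne⟩, i, u⟩, ?_⟩
      apply Subtype.ext
      show ((Multiplicative.ofAdd ρ1.toAdd, DihedralGroup.sr i),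
        ((1 : Multiplicative (ZMod p)), DihedralGroup.sr (i + (u : ZMod r)))) =
        ((ρ1, DihedralGroup.sr i), (τ1, DihedralGroup.sr j))
      have hij : i + (u : ZMod r) = j := by rw [hu]; ring
      rw [ofAdd_toAdd, hτ1, hij]
  rw [← Nat.card_eq_of_bijective f hbij, Nat.card_prod, Nat.card_prod]
  have h1 : Nat.card {v : ZMod p // v ≠ 0} = p - 1 := by
    rw [Nat.card_congr (unitsEquivNeZero (G₀ := ZMod p)).symm, Nat.card_eq_fintype_card,
      ZMod.card_units_eq_totient, Nat.totient_prime hpprime]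
  rw [h1, Nat.card_zmod, Nat.card_eq_fintype_card, ZMod.card_units_eq_totient, mul_assoc]
end
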